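/- For every x ∈ (0,1], the binary entropy function satisfies (1 + x)·h(1/(1+x)) ≤ √(2x), where h(p) = −p log p − (1−p) log(1−p). -/

import Mathlib

open Matrix MeasureTheory
open scoped ComplexOrder

noncomputable section

variable {n : Type*} [Fintype n] [DecidableEq n]

/-- Matrix logarithm via spectral decomposition (junk value 0 for non-Hermitian input). -/
def matLog (M : Matrix n n ℂ) : Matrix n n ℂ :=
  if h : M.IsHermitian then
    (h.eigenvectorUnitary : Matrix n n ℂ) *
      Matrix.diagonal (fun i => (Real.log (h.eigenvalues i) : ℂ)) *
      (star h.eigenvectorUnitary : Matrix n n ℂ)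
  else 0

/-- Complex matrix power via spectral decomposition (junk value 0 for non-Hermitian input). -/
def matCPow (M : Matrix n n ℂ) (z : ℂ) : Matrix n n ℂ :=
  if h : M.IsHermitian then
    (h.eigenvectorUnitary : Matrix n n ℂ) *
      Matrix.diagonal (fun i => ((h.eigenvalues i : ℂ) ^ z)) *
      (star h.eigenvectorUnitary : Matrix n n ℂ)
  else 0

/-- von Neumann entropy `S(ρ) = -Tr[ρ log ρ]`. -/
def vnEntropy (M : Matrix n n ℂ) : ℝ := -(Matrix.trace (M * matLog M)).re

/-- Quantum relative entropy `D(ρ‖σ) = Tr[ρ (log ρ - log σ)]`. -/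
def relEntropy (ρ σ : Matrix n n ℂ) : ℝ := (Matrix.trace (ρ * (matLog ρ - matLog σ))).re

/-- Operator norm of a matrix. -/
def opNorm (M : Matrix n n ℂ) : ℝ := ‖Matrix.toEuclideanCLM (𝕜 := ℂ) M‖

/-- Old Mathlib `Matrix.PosSemidef.sqrt` (removed), with its Dec 2024 definition. -/
def psdSqrt {M : Matrix n n ℂ} (hM : M.PosSemidef) : Matrix n n ℂ :=
  (hM.1.eigenvectorUnitary : Matrix n n ℂ) *
    Matrix.diagonal ((↑) ∘ (Real.sqrt ·) ∘ hM.1.eigenvalues) *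
    (star hM.1.eigenvectorUnitary : Matrix n n ℂ)

/-- Trace norm `‖A‖₁ = Tr √(AᴴA)`. -/
def traceNorm (A : Matrix n n ℂ) : ℝ :=
  ((psdSqrt (Matrix.posSemidef_conjTranspose_mul_self A)).trace).re

/-- Positive semidefinite square root (junk value 0 otherwise). -/
def sqrtPSD (M : Matrix n n ℂ) : Matrix n n ℂ :=
  open scoped Classical in
  if h : M.PosSemidef then psdSqrt h else 0

/-- Fidelity `F(ρ,σ) = ‖√ρ √σ‖₁`. -/
def fidelity (ρ σ : Matrix n n ℂ) : ℝ := traceNorm (sqrtPSD ρ * sqrtPSD σ)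

/-- Binary entropy (natural logarithm). -/
def binEnt (p : ℝ) : ℝ := -(p * Real.log p) - (1 - p) * Real.log (1 - p)

section ptrace
variable {α β : Type*} [Fintype α] [Fintype β]

/-- Partial trace over the first tensor factor. -/
def ptraceFst (M : Matrix (α × β) (α × β) ℂ) : Matrix β β ℂ :=
  fun i j => ∑ a : α, M (a, i) (a, j)

/-- Partial trace over the second tensor factor. -/
def ptraceSnd (M : Matrix (α × β) (α × β) ℂ) : Matrix α α ℂ :=
  fun i j => ∑ b : β, M (i, b) (j, b)

end ptrace



lemma aux1 (u : ℝ) (hu : 1 ≤ u) : 2 * Real.log u ≤ u - u⁻¹ := by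
  have hu0 : 0 < u := lt_of_lt_of_le one_pos hu
  have hv : 0 ≤ Real.log u := Real.log_nonneg hu
  have h := Real.self_le_sinh_iff.mpr hv
  rw [Real.sinh_eq] at h
  have hexp : Real.exp (Real.log u) = u := Real.exp_log hu0
  have hexp' : Real.exp (-Real.log u) = u⁻¹ := by rw [Real.exp_neg, hexp]
  rw [hexp, hexp'] at h
  linarith

lemma aux2 (t : ℝ) (ht : 1 ≤ t) : Real.log t ≤ (t - 1) / Real.sqrt t := by
  have ht0 : 0 < t := lt_of_lt_of_le one_pos ht
  have hs : (1:ℝ) ≤ Real.sqrt t := by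
    rw [show (1:ℝ) = Real.sqrt 1 by simp]
    exact Real.sqrt_le_sqrt ht
  have hs0 : 0 < Real.sqrt t := lt_of_lt_of_le one_pos hs
  have h := aux1 (Real.sqrt t) hs
  have hlog : Real.log (Real.sqrt t) = Real.log t / 2 := Real.log_sqrt ht0.le
  have hsq : Real.sqrt t * Real.sqrt t = t := Real.mul_self_sqrt ht0.le
  rw [hlog] at h
  rw [le_div_iff₀ hs0]
  have hinv : (Real.sqrt t)⁻¹ * Real.sqrt t = 1 := inv_mul_cancel₀ hs0.ne'
  nlinarith


/-- `(1+x) h(1/(1+x)) ≤ √(2x)` for `x ∈ (0,1]`. -/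
theorem stmt8 : ∀ x : ℝ, 0 < x → x ≤ 1 →
    (1 + x) * binEnt (1 / (1 + x)) ≤ Real.sqrt (2 * x) := by
  intro x hx hx1
  unfold binEnt
  revert hx hx1; revert x
  intro x hx hx1
  have h1x : (0:ℝ) < 1 + x := by linarith
  have hs0 : 0 < Real.sqrt x := Real.sqrt_pos.mpr hx
  have ht0 : 0 < Real.sqrt (1+x) := Real.sqrt_pos.mpr h1x
  have hs : Real.sqrt x * Real.sqrt x = x := Real.mul_self_sqrt hx.le
  have ht : Real.sqrt (1+x) * Real.sqrt (1+x) = 1 + x := Real.mul_self_sqrt h1x.le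
  have hp : 1 - 1/(1+x) = x/(1+x) := by field_simp; ring
  have hlog1 : Real.log (1/(1+x)) = -Real.log (1+x) := by
    rw [one_div, Real.log_inv]
  have hlog2 : Real.log (x/(1+x)) = Real.log x - Real.log (1+x) :=
    Real.log_div hx.ne' h1x.ne'
  have heq : (1 + x) * (-((1/(1+x)) * Real.log (1/(1+x))) - (1 - 1/(1+x)) * Real.log (1 - 1/(1+x)))
      = Real.log (1+x) + x * (Real.log (1+x) - Real.log x) := by
    rw [hp, hlog1, hlog2]
    field_simp
    ring
  rw [heq]
  -- bound 1
  have key1 : Real.log (1+x) ≤ x / Real.sqrt (1+x) := by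
    have := aux2 (1+x) (by linarith)
    simpa using this
  -- bound 2
  have key2 : Real.log (1+x) - Real.log x ≤ 1 / (Real.sqrt x * Real.sqrt (1+x)) := by
    have h1 : (1:ℝ) ≤ (1+x)/x := (one_le_div hx).mpr (by linarith)
    have h2 := aux2 ((1+x)/x) h1
    rw [Real.log_div h1x.ne' hx.ne'] at h2
    have h3 : Real.sqrt ((1+x)/x) = Real.sqrt (1+x) / Real.sqrt x := Real.sqrt_div h1x.le x
    rw [h3] at h2
    calc Real.log (1+x) - Real.log x ≤ ((1+x)/x - 1) / (Real.sqrt (1+x) / Real.sqrt x) := h2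
      _ = 1 / (Real.sqrt x * Real.sqrt (1+x)) := by
          rw [div_div_eq_mul_div]
          field_simp
          nlinarith
  have hbound : Real.log (1+x) + x * (Real.log (1+x) - Real.log x)
      ≤ (x + Real.sqrt x) / Real.sqrt (1+x) := by
    have h4 : x * (Real.log (1+x) - Real.log x) ≤ Real.sqrt x / Real.sqrt (1+x) := by
      calc x * (Real.log (1+x) - Real.log x) ≤ x * (1 / (Real.sqrt x * Real.sqrt (1+x))) :=
            mul_le_mul_of_nonneg_left key2 hx.le
        _ = Real.sqrt x / Real.sqrt (1+x) := by
            field_simp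
            nlinarith
    have := add_le_add key1 h4
    calc Real.log (1+x) + x * (Real.log (1+x) - Real.log x)
        ≤ x / Real.sqrt (1+x) + Real.sqrt x / Real.sqrt (1+x) := this
      _ = (x + Real.sqrt x) / Real.sqrt (1+x) := by ring
  refine hbound.trans ?_
  rw [div_le_iff₀ ht0]
  have h5 : Real.sqrt (2*x) * Real.sqrt (1+x) = Real.sqrt (2*x*(1+x)) := (Real.sqrt_mul (by linarith) _).symm
  rw [h5]
  have h6 : x + Real.sqrt x = Real.sqrt ((x + Real.sqrt x)^2) := (Real.sqrt_sq (by positivity)).symm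
  rw [h6]
  apply Real.sqrt_le_sqrt
  nlinarith [sq_nonneg (Real.sqrt x - 1), hs, hs0.le, hx1]


end
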